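/- Let T be a rooted binary tree with n vertices and let i ≥ 1. The number of vertices v such that v has two children u, w with both |T_u| > i and |T_w| > i is at most n/i (i.e., at most ⌊n/i⌋). -/

import Mathlib

set_option linter.unusedSectionVars false

section BBN

variable {V : Type*} [Fintype V] [DecidableEq V]

/-- Subtree of `v` under parent function. -/
def subT (parent : V → V) (v : V) : Set V := {u : V | ∃ k : ℕ, parent^[k] u = v}

/-- Big branching nodes. -/
def SsetT (parent : V → V) (i : ℕ) : Set V :=
  {v : V | ∃ u w : V, u ≠ w ∧ u ≠ v ∧ w ≠ v ∧ parent u = v ∧ parent w = v ∧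
    i < (subT parent u).ncard ∧ i < (subT parent w).ncard}

variable (parent : V → V) (root : V)

lemma root_iter (hroot : parent root = root) (k : ℕ) : parent^[k] root = root := by
  induction k with
  | zero => rfl
  | succ n ih => rw [Function.iterate_succ_apply', ih, hroot]

lemma periodic_eq_root (hroot : parent root = root)
    (hreach : ∀ v : V, ∃ k : ℕ, parent^[k] v = root)
    {v : V} {m : ℕ} (hm : 1 ≤ m) (h : parent^[m] v = v) : v = root := by
  obtain ⟨k, hk⟩ := hreach v
  have hiter : ∀ j : ℕ, parent^[m * j] v = v := by
    intro j
    induction j with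
    | zero => simp
    | succ n ih => rw [Nat.mul_succ, Function.iterate_add_apply, h, ih]
  have hj : k ≤ m * k := Nat.le_mul_of_pos_left k hm
  have h2 : parent^[m * k] v = root := by
    calc parent^[m*k] v = parent^[(m*k - k) + k] v := by rw [Nat.sub_add_cancel hj]
    _ = parent^[m*k - k] (parent^[k] v) := by rw [Function.iterate_add_apply]
    _ = root := by rw [hk]; exact root_iter parent root hroot _
  rw [hiter k] at h2; exact h2

lemma sub_antisymm (hroot : parent root = root)
    (hreach : ∀ v : V, ∃ k : ℕ, parent^[k] v = root)
    {u v : V} {a b : ℕ}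
    (ha : parent^[a] u = v) (hb : parent^[b] v = u) : u = v := by
  rcases Nat.eq_zero_or_pos (a + b) with h0 | hpos
  · have : a = 0 := by omega
    subst this; simpa using ha
  · have hu : parent^[b + a] u = u := by
      rw [Function.iterate_add_apply, ha, hb]
    have hur : u = root := periodic_eq_root parent root hroot hreach (by omega) hu
    rw [hur] at ha
    rw [root_iter parent root hroot a] at ha
    rw [hur]; exact ha

lemma mem_subT_self (v : V) : v ∈ subT parent v := ⟨0, rfl⟩

lemma subT_mono {u v : V} (h : u ∈ subT parent v) : subT parent u ⊆ subT parent v := by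
  obtain ⟨a, ha⟩ := h
  rintro x ⟨k, hk⟩
  exact ⟨a + k, by rw [Function.iterate_add_apply, hk, ha]⟩

lemma child_mem_subT {c t : V} (h : parent c = t) : c ∈ subT parent t :=
  ⟨1, by simpa using h⟩

lemma parent_not_mem_subT (hroot : parent root = root)
    (hreach : ∀ v : V, ∃ k : ℕ, parent^[k] v = root)
    {c t : V} (h : parent c = t) (hne : c ≠ t) : t ∉ subT parent c := by
  rintro ⟨a, ha⟩
  have hb : parent^[1] c = t := by simpa using h
  exact hne (sub_antisymm parent root hroot hreach ha hb).symm

lemma cover_by_child {v t : V} (h : v ∈ subT parent t) (hne : v ≠ t) :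
    ∃ c, parent c = t ∧ c ≠ t ∧ v ∈ subT parent c := by
  classical
  have hex : ∃ k : ℕ, parent^[k] v = t := h
  set k := Nat.find hex with hkdef
  have hk : parent^[k] v = t := Nat.find_spec hex
  have hk1 : 1 ≤ k := by
    rcases Nat.eq_zero_or_pos k with h0 | h1
    · exfalso; apply hne; rw [← hk, h0]; rfl
    · exact h1
  refine ⟨parent^[k-1] v, ?_, ?_, ⟨k-1, rfl⟩⟩
  · have h2 : parent^[k-1+1] v = t := by
      have h3 : k - 1 + 1 = k := by omega
      rw [h3]; exact hk
    rw [Function.iterate_succ_apply'] at h2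
    exact h2
  · intro hct
    exact Nat.find_min hex (by omega : k - 1 < k) hct

lemma comparable_of_mem_inter {x u v : V} (hu : x ∈ subT parent u) (hv : x ∈ subT parent v) :
    u ∈ subT parent v ∨ v ∈ subT parent u := by
  obtain ⟨a, ha⟩ := hu
  obtain ⟨b, hb⟩ := hv
  rcases le_total a b with hab | hab
  · left
    exact ⟨b - a, by rw [← ha, ← Function.iterate_add_apply, Nat.sub_add_cancel hab, hb]⟩
  · right
    exact ⟨a - b, by rw [← hb, ← Function.iterate_add_apply, Nat.sub_add_cancel hab, ha]⟩

lemma sibling_not_mem (hroot : parent root = root)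
    (hreach : ∀ v : V, ∃ k : ℕ, parent^[k] v = root)
    {c1 c2 : V} (hp : parent c1 = parent c2) (hne : c1 ≠ c2) (hne2 : c2 ≠ parent c2) :
    c1 ∉ subT parent c2 := by
  rintro ⟨d, hd⟩
  have hd1 : 1 ≤ d := by
    rcases Nat.eq_zero_or_pos d with h0 | h1
    · exfalso; apply hne; rw [← hd, h0]; rfl
    · exact h1
  have hper : parent^[d] (parent c1) = parent c1 := by
    rw [← Function.iterate_succ_apply, Function.iterate_succ_apply', hd, ← hp]
  have hr : parent c1 = root := periodic_eq_root parent root hroot hreach hd1 hper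
  have h1 : c2 = parent^[d-1] (parent c1) := by
    have h2 : parent^[d-1] (parent c1) = parent^[d] c1 := by
      rw [← Function.iterate_succ_apply]
      congr 1
      omega
    rw [h2, hd]
  have hc2 : c2 = root := by rw [h1, hr, root_iter parent root hroot]
  apply hne2
  rw [hc2, hroot]

lemma siblings_disjoint (hroot : parent root = root)
    (hreach : ∀ v : V, ∃ k : ℕ, parent^[k] v = root)
    {c1 c2 t : V} (h1 : parent c1 = t) (h2 : parent c2 = t) (hne : c1 ≠ c2)
    (hn1 : c1 ≠ t) (hn2 : c2 ≠ t) :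
    Disjoint (subT parent c1) (subT parent c2) := by
  rw [Set.disjoint_left]
  intro x hx1 hx2
  rcases comparable_of_mem_inter parent hx1 hx2 with h | h
  · exact sibling_not_mem parent root hroot hreach (by rw [h1, h2]) hne (by rw [h2]; exact hn2) h
  · exact sibling_not_mem parent root hroot hreach (by rw [h1, h2]) hne.symm (by rw [h1]; exact hn1) h

lemma Sset_big {i : ℕ} {v : V} (h : v ∈ SsetT parent i) : i < (subT parent v).ncard := by
  obtain ⟨u, w, _, _, _, hpu, _, hu, _⟩ := h
  exact lt_of_lt_of_le hu (Set.ncard_le_ncard (subT_mono parent (child_mem_subT parent hpu)) (Set.toFinite _))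

lemma key (hroot : parent root = root)
    (hreach : ∀ v : V, ∃ k : ℕ, parent^[k] v = root)
    (hbin : ∀ v : V, {u : V | parent u = v ∧ u ≠ v}.ncard ≤ 2)
    (i : ℕ) (hi : 1 ≤ i) :
    ∀ n : ℕ, ∀ t : V, (subT parent t).ncard ≤ n → i < (subT parent t).ncard →
      ((SsetT parent i ∩ subT parent t).ncard + 1) * (i + 1) ≤ (subT parent t).ncard := by
  intro n
  induction n with
  | zero => intro t hle hlt; omega
  | succ n IH =>
    intro t hle hlt
    set B : Set V := {c : V | parent c = t ∧ c ≠ t ∧ i < (subT parent c).ncard} with hBdef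
    have hB2 : B.ncard ≤ 2 := by
      refine le_trans (Set.ncard_le_ncard ?_ (Set.toFinite _)) (hbin t)
      rintro c ⟨h1, h2, _⟩; exact ⟨h1, h2⟩
    -- facts about children in B
    have hBsub : ∀ c ∈ B, subT parent c ⊆ subT parent t := fun c hc =>
      subT_mono parent (child_mem_subT parent hc.1)
    have hBlt : ∀ c ∈ B, (subT parent c).ncard < (subT parent t).ncard := by
      intro c hc
      refine Set.ncard_lt_ncard ⟨hBsub c hc, fun hts => ?_⟩ (Set.toFinite _)
      exact parent_not_mem_subT parent root hroot hreach hc.1 hc.2.1 (hts (mem_subT_self parent t))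
    have hIH : ∀ c ∈ B, ((SsetT parent i ∩ subT parent c).ncard + 1) * (i + 1) ≤ (subT parent c).ncard := by
      intro c hc
      exact IH c (by have := hBlt c hc; omega) hc.2.2
    -- covering of S ∩ subT t
    have hcover : ∀ v ∈ SsetT parent i ∩ subT parent t,
        v = t ∨ ∃ c ∈ B, v ∈ SsetT parent i ∩ subT parent c := by
      rintro v ⟨hvS, hvt⟩
      rcases eq_or_ne v t with rfl | hne
      · left; rfl
      · right
        obtain ⟨c, hc1, hc2, hc3⟩ := cover_by_child parent hvt hne
        refine ⟨c, ⟨hc1, hc2, ?_⟩, hvS, hc3⟩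
        exact lt_of_lt_of_le (Sset_big parent hvS)
          (Set.ncard_le_ncard (subT_mono parent hc3) (Set.toFinite _))
    have htwo : t ∈ SsetT parent i → ∃ c1 ∈ B, ∃ c2 ∈ B, c1 ≠ c2 := by
      rintro ⟨u, w, huw, hu, hw, hpu, hpw, hbu, hbw⟩
      exact ⟨u, ⟨hpu, hu, hbu⟩, w, ⟨hpw, hw, hbw⟩, huw⟩
    interval_cases hB : B.ncard
    · -- B empty
      have hBe : B = ∅ := (Set.ncard_eq_zero (Set.toFinite _)).mp hB
      have hSe : SsetT parent i ∩ subT parent t = ∅ := by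
        rw [Set.eq_empty_iff_forall_notMem]
        intro v hv
        rcases hcover v hv with rfl | ⟨c, hc, _⟩
        · obtain ⟨c1, hc1, _⟩ := htwo hv.1
          rw [hBe] at hc1; exact hc1
        · rw [hBe] at hc; exact hc
      rw [hSe, Set.ncard_empty]
      omega
    · -- B singleton
      obtain ⟨c, hc⟩ := (Set.ncard_eq_one).mp hB
      have hcB : c ∈ B := by rw [hc]; rfl
      have hnt : t ∉ SsetT parent i := by
        intro ht
        obtain ⟨c1, hc1, c2, hc2, hne⟩ := htwo ht
        rw [hc] at hc1 hc2
        exact hne (hc1.trans hc2.symm)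
      have hsubset : SsetT parent i ∩ subT parent t ⊆ SsetT parent i ∩ subT parent c := by
        intro v hv
        rcases hcover v hv with rfl | ⟨c', hc', hv'⟩
        · exact absurd hv.1 hnt
        · rw [hc] at hc'; rwa [hc'] at hv'
      calc ((SsetT parent i ∩ subT parent t).ncard + 1) * (i + 1)
          ≤ ((SsetT parent i ∩ subT parent c).ncard + 1) * (i + 1) := by
            have := Set.ncard_le_ncard hsubset (Set.toFinite _); exact Nat.mul_le_mul_right _ (by omega)
        _ ≤ (subT parent c).ncard := hIH c hcB
        _ ≤ (subT parent t).ncard := Set.ncard_le_ncard (hBsub c hcB) (Set.toFinite _)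
    · -- B has two elements
      obtain ⟨c1, c2, hne, hc⟩ := (Set.ncard_eq_two).mp hB
      have hc1B : c1 ∈ B := by rw [hc]; left; rfl
      have hc2B : c2 ∈ B := by rw [hc]; right; rfl
      have hsubset : SsetT parent i ∩ subT parent t ⊆
          {t} ∪ ((SsetT parent i ∩ subT parent c1) ∪ (SsetT parent i ∩ subT parent c2)) := by
        intro v hv
        rcases hcover v hv with rfl | ⟨c, hcB, hv'⟩
        · left; rfl
        · rw [hc] at hcB
          rcases hcB with rfl | rfl
          · right; left; exact hv'
          · right; right; exact hv'
      have hcount : (SsetT parent i ∩ subT parent t).ncard ≤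
          1 + ((SsetT parent i ∩ subT parent c1).ncard + (SsetT parent i ∩ subT parent c2).ncard) := by
        refine le_trans (Set.ncard_le_ncard hsubset (Set.toFinite _)) ?_
        refine le_trans (Set.ncard_union_le _ _) ?_
        simp only [Set.ncard_singleton]
        exact Nat.add_le_add_left (Set.ncard_union_le _ _) 1
      have hdisj : Disjoint (subT parent c1) (subT parent c2) :=
        siblings_disjoint parent root hroot hreach hc1B.1 hc2B.1 hne hc1B.2.1 hc2B.2.1
      have hsub12 : subT parent c1 ∪ subT parent c2 ⊆ subT parent t \ {t} := by
        intro x hx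
        rcases hx with hx | hx
        · exact ⟨hBsub c1 hc1B hx, fun hxt => parent_not_mem_subT parent root hroot hreach
            hc1B.1 hc1B.2.1 (hxt ▸ hx)⟩
        · exact ⟨hBsub c2 hc2B hx, fun hxt => parent_not_mem_subT parent root hroot hreach
            hc2B.1 hc2B.2.1 (hxt ▸ hx)⟩
      have hsum : (subT parent c1).ncard + (subT parent c2).ncard + 1 ≤ (subT parent t).ncard := by
        have h1 : (subT parent c1).ncard + (subT parent c2).ncard
            = (subT parent c1 ∪ subT parent c2).ncard :=
          (Set.ncard_union_eq hdisj (Set.toFinite _) (Set.toFinite _)).symm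
        have h2 : (subT parent c1 ∪ subT parent c2).ncard ≤ (subT parent t \ {t}).ncard :=
          Set.ncard_le_ncard hsub12 (Set.toFinite _)
        have h3 : (subT parent t \ {t}).ncard = (subT parent t).ncard - 1 :=
          Set.ncard_diff_singleton_of_mem (mem_subT_self parent t)
        have h4 : 1 ≤ (subT parent t).ncard := by omega
        omega
      have hI1 := hIH c1 hc1B
      have hI2 := hIH c2 hc2B
      set a := (SsetT parent i ∩ subT parent t).ncard
      set a1 := (SsetT parent i ∩ subT parent c1).ncard
      set a2 := (SsetT parent i ∩ subT parent c2).ncard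
      calc (a + 1) * (i + 1) ≤ (a1 + a2 + 2) * (i + 1) := Nat.mul_le_mul_right _ (by omega)
        _ = (a1 + 1) * (i + 1) + (a2 + 1) * (i + 1) := by ring
        _ ≤ (subT parent c1).ncard + (subT parent c2).ncard := Nat.add_le_add hI1 hI2
        _ ≤ (subT parent t).ncard := by omega

end BBN

/-- In a rooted binary tree on `n` vertices given by a parent function, the
number of vertices having two children whose subtrees both have size
greater than `i` is at most `n / i`. -/
theorem big_branching_nodes_few {V : Type*} [Fintype V] [DecidableEq V]
    (parent : V → V) (root : V)
    (hroot : parent root = root)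
    (hreach : ∀ v : V, ∃ k : ℕ, parent^[k] v = root)
    (hbin : ∀ v : V, {u : V | parent u = v ∧ u ≠ v}.ncard ≤ 2)
    (i : ℕ) (hi : 1 ≤ i)
    (sub : V → Set V) (hsub : ∀ v, sub v = {u : V | ∃ k : ℕ, parent^[k] u = v}) :
    {v : V | ∃ u w : V, u ≠ w ∧ u ≠ v ∧ w ≠ v ∧ parent u = v ∧ parent w = v ∧
      i < (sub u).ncard ∧ i < (sub w).ncard}.ncard ≤ Fintype.card V / i := by
  simp only [hsub]
  show (SsetT parent i).ncard ≤ Fintype.card V / i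
  rcases le_or_gt (Fintype.card V) i with hni | hni
  · have hSe : SsetT parent i = ∅ := by
      rw [Set.eq_empty_iff_forall_notMem]
      intro v hv
      have h1 := Sset_big parent hv
      have h2 : (subT parent v).ncard ≤ Fintype.card V := by
        rw [← Nat.card_eq_fintype_card, ← Set.ncard_univ]
        exact Set.ncard_le_ncard (Set.subset_univ _) (Set.toFinite _)
      omega
    rw [hSe, Set.ncard_empty]
    exact Nat.zero_le _
  · have hruniv : subT parent root = Set.univ := by
      ext v; simp only [Set.mem_univ, iff_true]; exact hreach v
    have hcard : (subT parent root).ncard = Fintype.card V := by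
      rw [hruniv, Set.ncard_univ, Nat.card_eq_fintype_card]
    have hk := key parent root hroot hreach hbin i hi (Fintype.card V) root
      (by omega) (by omega)
    rw [hruniv, Set.inter_univ, Set.ncard_univ, Nat.card_eq_fintype_card] at hk
    rw [Nat.le_div_iff_mul_le (by omega : 0 < i)]
    nlinarith [hk]
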